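/- Let m ≥ 2, s = √m + 1, and for x ∈ [0, 1] define f(x) = x(s + m − 1)/s and g(x) = x + s(1 − x). Then max{f(x), g(x)} ≥ (√m + 1)/2 for every x ∈ [0, 1], with equality attained at x = s²/(s² + m − 1). -/

import Mathlib

/-- Lower bound instance on related machines with speeds `s₁ = √m + 1` and
`s₂ = ⋯ = s_m = 1`: with `s = √m + 1`, `f(x) = x(s + m − 1)/s` and
`g(x) = x + s(1 − x)`, we have `max{f(x), g(x)} ≥ (√m + 1)/2` for all
`x ∈ [0, 1]`, with equality attained at `x = s²/(s² + m − 1)`. -/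
theorem war_lower_instance (m : ℕ) (hm : 2 ≤ m) (s : ℝ) (hs : s = Real.sqrt m + 1) :
    (∀ x : ℝ, 0 ≤ x → x ≤ 1 →
      (Real.sqrt m + 1) / 2 ≤ max (x * (s + (m : ℝ) - 1) / s) (x + s * (1 - x))) ∧
    max ((s ^ 2 / (s ^ 2 + (m : ℝ) - 1)) * (s + (m : ℝ) - 1) / s)
        ((s ^ 2 / (s ^ 2 + (m : ℝ) - 1)) + s * (1 - s ^ 2 / (s ^ 2 + (m : ℝ) - 1))) =
      (Real.sqrt m + 1) / 2 := by
  set r := Real.sqrt m with hrdef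
  have hmpos : (0:ℝ) < (m:ℝ) := by exact_mod_cast Nat.lt_of_lt_of_le Nat.zero_lt_two hm
  have hr0 : 0 < r := Real.sqrt_pos.mpr hmpos
  have hr2 : r ^ 2 = (m:ℝ) := Real.sq_sqrt hmpos.le
  have hm' : (m:ℝ) = r ^ 2 := hr2.symm
  have hs0 : 0 < s := by rw [hs]; linarith
  have hden : s ^ 2 + (m:ℝ) - 1 = 2 * r * s := by rw [hs, hm']; ring
  have hfs : s + (m:ℝ) - 1 = r * s := by rw [hs, hm']; ring
  constructor
  · intro x hx0 hx1
    by_cases h : s / (2 * r) ≤ x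
    · refine le_trans ?_ (le_max_left _ _)
      rw [hfs]
      rw [div_le_iff₀ (by positivity)] at h
      have heq : x * (r * s) / s = x * r := by field_simp
      rw [heq, hs] at *
      nlinarith
    · push_neg at h
      refine le_trans ?_ (le_max_right _ _)
      rw [lt_div_iff₀ (by positivity)] at h
      rw [hs] at h ⊢
      nlinarith
  · have hx : s ^ 2 / (s ^ 2 + (m:ℝ) - 1) = s / (2 * r) := by
      rw [hden]; rw [div_eq_div_iff (by positivity) (by positivity)]; ring
    have h1 : s ^ 2 / (s ^ 2 + (m:ℝ) - 1) * (s + (m:ℝ) - 1) / s = (r + 1) / 2 := by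
      rw [hx, hfs, hs]; field_simp
    have h2 : s ^ 2 / (s ^ 2 + (m:ℝ) - 1) + s * (1 - s ^ 2 / (s ^ 2 + (m:ℝ) - 1)) = (r + 1) / 2 := by
      rw [hx, hs]; field_simp; ring
    rw [h1, h2, max_self]
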